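/- Let M ∈ ℝ^{d₁×d₂} be a matrix with Frobenius norm ‖M‖_F = 1, let a ∈ ℝ^{d₁} and b ∈ ℝ^{d₂} be unit vectors, and let â ∈ ℝ^{d₁} be a top left singular vector of M, i.e. a unit vector with ‖Mᵀâ‖₂ = ‖M‖₂. Then min( ‖ââᵀ − aaᵀ‖₂² , 1/2 ) ≤ ‖vec(M)·vec(M)ᵀ − vec(abᵀ)·vec(abᵀ)ᵀ‖₂², where for a d₁×d₂ matrix X, vec(X) ∈ ℝ^{d₁·d₂} denotes the vector of all entries of X (indexed by the pairs (i,j)). -/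

import Mathlib

open Matrix

/-- Spectral norm (largest singular value): operator norm of the induced map
between Euclidean spaces. -/
noncomputable def specNorm {m n : Type*} [Fintype m] [Fintype n] [DecidableEq n]
    (M : Matrix m n ℝ) : ℝ :=
  ‖LinearMap.toContinuousLinearMap (Matrix.toEuclideanLin M)‖

/-- Euclidean norm of a vector. -/
noncomputable def euclNorm {n : Type*} [Fintype n] (x : n → ℝ) : ℝ :=
  Real.sqrt (∑ i, x i ^ 2)

/-- Frobenius norm of a matrix. -/
noncomputable def frobNorm {m n : Type*} [Fintype m] [Fintype n] (M : Matrix m n ℝ) : ℝ :=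
  Real.sqrt (∑ i, ∑ j, M i j ^ 2)

namespace StmtAux

variable {n : Type*} [Fintype n]

noncomputable def dot (x y : n → ℝ) : ℝ := ∑ i, x i * y i

lemma dot_self_nonneg (x : n → ℝ) : 0 ≤ dot x x :=
  Finset.sum_nonneg fun i _ => mul_self_nonneg _

lemma euclNorm_eq (x : n → ℝ) : euclNorm x = Real.sqrt (dot x x) := by
  unfold euclNorm dot; congr 1; exact Finset.sum_congr rfl fun i _ => sq (x i)

lemma sq_euclNorm (x : n → ℝ) : euclNorm x ^ 2 = dot x x := by
  rw [euclNorm_eq, Real.sq_sqrt (dot_self_nonneg x)]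

lemma euclNorm_nonneg (x : n → ℝ) : 0 ≤ euclNorm x := Real.sqrt_nonneg _

lemma norm_one_dot {x : n → ℝ} (h : euclNorm x = 1) : dot x x = 1 := by
  rw [euclNorm_eq] at h; exact Real.sqrt_eq_one.mp h

lemma dot_sq_le (x y : n → ℝ) : (dot x y) ^ 2 ≤ dot x x * dot y y := by
  have := Finset.sum_mul_sq_le_sq_mul_sq Finset.univ x y
  simpa [dot, pow_two] using this

lemma dot_le_norms (x y : n → ℝ) : dot x y ≤ euclNorm x * euclNorm y := by
  calc dot x y ≤ |dot x y| := le_abs_self _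
    _ = Real.sqrt ((dot x y) ^ 2) := (Real.sqrt_sq_eq_abs _).symm
    _ ≤ Real.sqrt (dot x x * dot y y) := Real.sqrt_le_sqrt (dot_sq_le x y)
    _ = euclNorm x * euclNorm y := by
        rw [Real.sqrt_mul (dot_self_nonneg x), euclNorm_eq, euclNorm_eq]

lemma dot_comm (x y : n → ℝ) : dot x y = dot y x := by
  unfold dot; exact Finset.sum_congr rfl fun i _ => mul_comm _ _

lemma dot_add_left (x y z : n → ℝ) : dot (x + y) z = dot x z + dot y z := by
  unfold dot; rw [← Finset.sum_add_distrib]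
  exact Finset.sum_congr rfl fun i _ => by simp [add_mul]

lemma dot_sub_left (x y z : n → ℝ) : dot (x - y) z = dot x z - dot y z := by
  unfold dot; rw [← Finset.sum_sub_distrib]
  exact Finset.sum_congr rfl fun i _ => by simp [sub_mul]

lemma dot_smul_left (r : ℝ) (x y : n → ℝ) : dot (r • x) y = r * dot x y := by
  unfold dot; rw [Finset.mul_sum]
  exact Finset.sum_congr rfl fun i _ => by simp [mul_assoc]

lemma dot_add_right (x y z : n → ℝ) : dot x (y + z) = dot x y + dot x z := by
  rw [dot_comm, dot_add_left, dot_comm y x, dot_comm z x]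

lemma dot_sub_right (x y z : n → ℝ) : dot x (y - z) = dot x y - dot x z := by
  rw [dot_comm, dot_sub_left, dot_comm y x, dot_comm z x]

lemma dot_smul_right (r : ℝ) (x y : n → ℝ) : dot x (r • y) = r * dot x y := by
  rw [dot_comm, dot_smul_left, dot_comm y x]

lemma dot_mulVec_transpose {m : Type*} [Fintype m] (M : Matrix m n ℝ)
    (x : m → ℝ) (z : n → ℝ) : dot (Mᵀ *ᵥ x) z = dot x (M *ᵥ z) := by
  unfold dot
  simp only [mulVec, dotProduct, transpose_apply, Finset.sum_mul, Finset.mul_sum]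
  rw [Finset.sum_comm]
  exact Finset.sum_congr rfl fun i _ => Finset.sum_congr rfl fun j _ => by ring

lemma vecMulVec_mulVec (u v x : n → ℝ) : (vecMulVec u v) *ᵥ x = (dot v x) • u := by
  funext i
  simp only [vecMulVec_apply, mulVec, dotProduct, dot, Pi.smul_apply, smul_eq_mul,
    Finset.sum_mul]
  rw [← Finset.sum_mul, Finset.sum_mul]
  exact Finset.sum_congr rfl fun j _ => by ring

lemma euclNorm_eq_norm (x : EuclideanSpace ℝ n) :
    euclNorm (WithLp.equiv 2 (n → ℝ) x) = ‖x‖ := by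
  rw [EuclideanSpace.norm_eq, euclNorm]
  congr 1
  refine Finset.sum_congr rfl fun i _ => ?_
  rw [Real.norm_eq_abs, sq_abs]; rfl

lemma specNorm_nonneg {m : Type*} [Fintype m] [DecidableEq n] (A : Matrix m n ℝ) :
    0 ≤ specNorm A := norm_nonneg _

lemma specNorm_le {m : Type*} [Fintype m] [DecidableEq n]
    (A : Matrix m n ℝ) {K : ℝ} (hK : 0 ≤ K)
    (h : ∀ x, euclNorm (A *ᵥ x) ≤ K * euclNorm x) : specNorm A ≤ K := by
  apply ContinuousLinearMap.opNorm_le_bound _ hK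
  intro x
  have := h (WithLp.equiv 2 (n → ℝ) x)
  rw [euclNorm_eq_norm] at this
  refine le_trans (le_of_eq ?_) this
  rw [← euclNorm_eq_norm]; rfl

lemma le_specNorm {m : Type*} [Fintype m] [DecidableEq n]
    (A : Matrix m n ℝ) (x : n → ℝ) :
    euclNorm (A *ᵥ x) ≤ specNorm A * euclNorm x := by
  have h := (LinearMap.toContinuousLinearMap (Matrix.toEuclideanLin A)).le_opNorm
    ((WithLp.equiv 2 (n → ℝ)).symm x)
  have e1 : euclNorm x = ‖(WithLp.equiv 2 (n → ℝ)).symm x‖ := by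
    rw [← euclNorm_eq_norm]; simp
  have e2 : euclNorm (A *ᵥ x) =
      ‖LinearMap.toContinuousLinearMap (Matrix.toEuclideanLin A)
        ((WithLp.equiv 2 (n → ℝ)).symm x)‖ := by
    rw [← euclNorm_eq_norm]
    rfl
  rw [e1, e2]; exact h

lemma transpose_bound {m : Type*} [Fintype m] [DecidableEq n] [DecidableEq m]
    (M : Matrix m n ℝ) (x : m → ℝ) :
    euclNorm (Mᵀ *ᵥ x) ≤ specNorm M * euclNorm x := by
  have key : dot (Mᵀ *ᵥ x) (Mᵀ *ᵥ x) = dot x (M *ᵥ (Mᵀ *ᵥ x)) :=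
    dot_mulVec_transpose M x _
  have h1 : dot x (M *ᵥ (Mᵀ *ᵥ x)) ≤ euclNorm x * euclNorm (M *ᵥ (Mᵀ *ᵥ x)) :=
    dot_le_norms _ _
  have h2 : euclNorm (M *ᵥ (Mᵀ *ᵥ x)) ≤ specNorm M * euclNorm (Mᵀ *ᵥ x) :=
    le_specNorm M _
  have h3 : euclNorm (Mᵀ *ᵥ x) ^ 2 ≤ euclNorm x * (specNorm M * euclNorm (Mᵀ *ᵥ x)) := by
    rw [sq_euclNorm, key]
    calc dot x (M *ᵥ (Mᵀ *ᵥ x)) ≤ euclNorm x * euclNorm (M *ᵥ (Mᵀ *ᵥ x)) := h1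
      _ ≤ euclNorm x * (specNorm M * euclNorm (Mᵀ *ᵥ x)) :=
        mul_le_mul_of_nonneg_left h2 (euclNorm_nonneg x)
  rcases (euclNorm_nonneg (Mᵀ *ᵥ x)).eq_or_lt with h0 | hpos
  · rw [← h0]; exact mul_nonneg (specNorm_nonneg M) (euclNorm_nonneg x)
  · nlinarith [h3, hpos]

lemma quad_zero (A B : ℝ) (h : ∀ s : ℝ, 0 ≤ A * s ^ 2 + B * s) : B = 0 := by
  have hA : 0 ≤ A := by nlinarith [h 1, h (-1)]
  by_contra hB
  have hk : (0:ℝ) < 1 / (A + 1) := by positivity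
  have hlt : A * (1 / (A + 1)) < 1 := by
    rw [mul_one_div, div_lt_one (by linarith)]; linarith
  have h4 := h (-B * (1 / (A + 1)))
  have hB2 : 0 < B ^ 2 := by positivity
  nlinarith [h4, mul_pos hB2 hk, mul_pos (mul_pos hB2 hk) (by linarith : (0:ℝ) < 1 - A * (1 / (A + 1)))]

lemma bessel (c ah w : n → ℝ) (hA : dot ah ah = 1) (how : dot ah w = 0) :
    dot w w * (dot c ah) ^ 2 + (dot c w) ^ 2 ≤ dot w w * dot c c := by
  have hwa : dot w ah = 0 := by rw [dot_comm]; exact how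
  rcases (dot_self_nonneg w).eq_or_lt with h0 | hp
  · nlinarith [dot_sq_le c w, dot_self_nonneg c, h0.symm ▸ (le_refl (0:ℝ))]
  · have hr := dot_self_nonneg
      ((dot w w) • c - (dot w w * dot c ah) • ah - (dot c w) • w)
    have h1 : dot w c = dot c w := dot_comm w c
    have h2 : dot ah c = dot c ah := dot_comm ah c
    simp only [dot_sub_left, dot_sub_right, dot_smul_left, dot_smul_right, hA, how, hwa,
      h1, h2] at hr
    nlinarith [hr, hp]

lemma rank2_upper [DecidableEq n] (u v : n → ℝ)
    (hu : dot u u = 1) (hv : dot v v = 1) :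
    specNorm (vecMulVec u u - vecMulVec v v) ^ 2 ≤ 1 - dot u v ^ 2 := by
  have hc2 : dot u v ^ 2 ≤ 1 := by
    have := dot_sq_le u v; rw [hu, hv] at this; simpa using this
  have key : specNorm (vecMulVec u u - vecMulVec v v) ≤ Real.sqrt (1 - dot u v ^ 2) := by
    apply specNorm_le _ (Real.sqrt_nonneg _)
    intro x
    have hAx : (vecMulVec u u - vecMulVec v v) *ᵥ x = (dot u x) • u - (dot v x) • v := by
      rw [Matrix.sub_mulVec, vecMulVec_mulVec, vecMulVec_mulVec]
    have hvu : dot v u = dot u v := dot_comm v u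
    have hS : dot ((vecMulVec u u - vecMulVec v v) *ᵥ x)
        ((vecMulVec u u - vecMulVec v v) *ᵥ x)
        = dot u x ^ 2 + dot v x ^ 2 - 2 * dot u v * dot u x * dot v x := by
      rw [hAx]
      simp only [dot_sub_left, dot_sub_right, dot_smul_left, dot_smul_right, hu, hv, hvu]
      ring
    set p := dot u x
    set q := dot v x
    set c := dot u v with hcdef
    have hS0 : 0 ≤ p ^ 2 + q ^ 2 - 2 * c * p * q := hS ▸ dot_self_nonneg _
    have hxu : dot x u = p := dot_comm x u
    have hxv : dot x v = q := dot_comm x v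
    have hxz : dot x ((p - c * q) • u + (q - c * p) • v)
        = p ^ 2 + q ^ 2 - 2 * c * p * q := by
      simp only [dot_add_right, dot_smul_right, hxu, hxv]; ring
    have hzz : dot ((p - c * q) • u + (q - c * p) • v) ((p - c * q) • u + (q - c * p) • v)
        = (1 - c ^ 2) * (p ^ 2 + q ^ 2 - 2 * c * p * q) := by
      simp only [dot_add_left, dot_add_right, dot_smul_left, dot_smul_right, hu, hv, hvu,
        ← hcdef]
      ring
    have hcs := dot_sq_le x ((p - c * q) • u + (q - c * p) • v)
    rw [hxz, hzz] at hcs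
    have hSle : p ^ 2 + q ^ 2 - 2 * c * p * q ≤ (1 - c ^ 2) * dot x x := by
      rcases hS0.eq_or_lt with h0 | hpos
      · rw [← h0]
        exact mul_nonneg (by linarith) (dot_self_nonneg x)
      · nlinarith [hcs, hpos]
    rw [euclNorm_eq, euclNorm_eq, hS]
    calc Real.sqrt (p ^ 2 + q ^ 2 - 2 * c * p * q)
        ≤ Real.sqrt ((1 - c ^ 2) * dot x x) := Real.sqrt_le_sqrt hSle
      _ = Real.sqrt (1 - c ^ 2) * Real.sqrt (dot x x) :=
          Real.sqrt_mul (by linarith) _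
  have hnn := specNorm_nonneg (vecMulVec u u - vecMulVec v v)
  calc specNorm (vecMulVec u u - vecMulVec v v) ^ 2
      ≤ Real.sqrt (1 - dot u v ^ 2) ^ 2 := by
        apply pow_le_pow_left₀ hnn key
    _ = 1 - dot u v ^ 2 := Real.sq_sqrt (by linarith)

lemma rank2_lower [DecidableEq n] (u v : n → ℝ)
    (hu : dot u u = 1) (hv : dot v v = 1) :
    1 - dot u v ^ 2 ≤ specNorm (vecMulVec u u - vecMulVec v v) ^ 2 := by
  have hc2 : dot u v ^ 2 ≤ 1 := by
    have := dot_sq_le u v; rw [hu, hv] at this; simpa using this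
  have hvu : dot v u = dot u v := dot_comm v u
  have hAu : (vecMulVec u u - vecMulVec v v) *ᵥ u = (dot u u) • u - (dot v u) • v := by
    rw [Matrix.sub_mulVec, vecMulVec_mulVec, vecMulVec_mulVec]
  have hS : dot ((vecMulVec u u - vecMulVec v v) *ᵥ u)
      ((vecMulVec u u - vecMulVec v v) *ᵥ u) = 1 - dot u v ^ 2 := by
    rw [hAu]
    simp only [dot_sub_left, dot_sub_right, dot_smul_left, dot_smul_right, hu, hv, hvu]
    ring
  have h1 := le_specNorm (vecMulVec u u - vecMulVec v v) u
  rw [euclNorm_eq, hS, euclNorm_eq u, hu, Real.sqrt_one, mul_one] at h1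
  calc 1 - dot u v ^ 2 = Real.sqrt (1 - dot u v ^ 2) ^ 2 :=
        (Real.sq_sqrt (by linarith)).symm
    _ ≤ specNorm (vecMulVec u u - vecMulVec v v) ^ 2 :=
        pow_le_pow_left₀ (Real.sqrt_nonneg _) h1 2

end StmtAux

open StmtAux

set_option maxHeartbeats 1000000

theorem stmt_2 {d₁ d₂ : ℕ} (M : Matrix (Fin d₁) (Fin d₂) ℝ)
    (a : Fin d₁ → ℝ) (b : Fin d₂ → ℝ) (ahat : Fin d₁ → ℝ)
    (hM : frobNorm M = 1) (ha : euclNorm a = 1) (hb : euclNorm b = 1)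
    (hahat : euclNorm ahat = 1)
    (htop : euclNorm (Mᵀ *ᵥ ahat) = specNorm M) :
    min (specNorm (vecMulVec ahat ahat - vecMulVec a a) ^ 2) (1 / 2) ≤
      specNorm
        (vecMulVec (fun p : Fin d₁ × Fin d₂ => M p.1 p.2)
            (fun p : Fin d₁ × Fin d₂ => M p.1 p.2) -
          vecMulVec (fun p : Fin d₁ × Fin d₂ => a p.1 * b p.2)
            (fun p : Fin d₁ × Fin d₂ => a p.1 * b p.2)) ^ 2 := by
  classical
  have haa : dot a a = 1 := norm_one_dot ha
  have hbb : dot b b = 1 := norm_one_dot hb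
  have hah : dot ahat ahat = 1 := norm_one_dot hahat
  have hMsum : ∑ i, ∑ j, M i j ^ 2 = 1 := Real.sqrt_eq_one.mp hM
  -- vectorized versions
  have hu : dot (fun p : Fin d₁ × Fin d₂ => M p.1 p.2)
      (fun p : Fin d₁ × Fin d₂ => M p.1 p.2) = 1 := by
    unfold dot
    rw [Fintype.sum_prod_type, ← hMsum]
    exact Finset.sum_congr rfl fun i _ => Finset.sum_congr rfl fun j _ => (sq _).symm
  have hv : dot (fun p : Fin d₁ × Fin d₂ => a p.1 * b p.2)
      (fun p : Fin d₁ × Fin d₂ => a p.1 * b p.2) = 1 := by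
    have h1 : dot (fun p : Fin d₁ × Fin d₂ => a p.1 * b p.2)
        (fun p : Fin d₁ × Fin d₂ => a p.1 * b p.2)
        = (∑ i, a i * a i) * (∑ j, b j * b j) := by
      unfold dot
      rw [Fintype.sum_prod_type, Finset.sum_mul]
      refine Finset.sum_congr rfl fun i _ => ?_
      rw [Finset.mul_sum]
      exact Finset.sum_congr rfl fun j _ => by ring
    rw [h1, show (∑ i, a i * a i) = dot a a from rfl,
      show (∑ j, b j * b j) = dot b b from rfl, haa, hbb]; ring
  have hdotuv : dot (fun p : Fin d₁ × Fin d₂ => M p.1 p.2)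
      (fun p : Fin d₁ × Fin d₂ => a p.1 * b p.2) = dot (Mᵀ *ᵥ a) b := by
    unfold dot
    simp only [mulVec, dotProduct, transpose_apply, Finset.sum_mul]
    rw [Fintype.sum_prod_type, Finset.sum_comm]
    exact Finset.sum_congr rfl fun j _ => Finset.sum_congr rfl fun i _ => by ring
  set c := dot ahat a with hcdef
  have hc2 : c ^ 2 ≤ 1 := by
    have := dot_sq_le ahat a; rw [hah, haa] at this; simpa using this
  set σ := specNorm M with hσdef
  have hσ0 : 0 ≤ σ := specNorm_nonneg M
  have hσ2 : dot (Mᵀ *ᵥ ahat) (Mᵀ *ᵥ ahat) = σ ^ 2 := by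
    rw [← sq_euclNorm, htop]
  -- orthogonal decomposition of a
  set w : Fin d₁ → ℝ := a - c • ahat with hwdef
  have hahw : dot ahat w = 0 := by
    rw [hwdef, dot_sub_right, dot_smul_right, hah, hcdef]; ring
  have hww : dot w w = 1 - c ^ 2 := by
    rw [hwdef]
    simp only [dot_sub_left, dot_sub_right, dot_smul_left, dot_smul_right, haa, hah,
      dot_comm a ahat, ← hcdef]
    ring
  have hdecomp : Mᵀ *ᵥ a = c • (Mᵀ *ᵥ ahat) + Mᵀ *ᵥ w := by
    rw [← Matrix.mulVec_smul, ← Matrix.mulVec_add]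
    funext i
    simp [hwdef]
  set B := dot (Mᵀ *ᵥ ahat) (Mᵀ *ᵥ w) with hBdef
  set Wq := dot (Mᵀ *ᵥ w) (Mᵀ *ᵥ w) with hWqdef
  -- cross term vanishes
  have hB0 : B = 0 := by
    have hq : ∀ s : ℝ, 0 ≤ (σ ^ 2 * (1 - c ^ 2) - Wq) * s ^ 2 + (-2 * B) * s := by
      intro s
      have hb1 := transpose_bound M (ahat + s • w)
      have hb2 : euclNorm (Mᵀ *ᵥ (ahat + s • w)) ^ 2 ≤ (σ * euclNorm (ahat + s • w)) ^ 2 :=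
        pow_le_pow_left₀ (euclNorm_nonneg _) hb1 2
      rw [mul_pow, sq_euclNorm, sq_euclNorm] at hb2
      rw [Matrix.mulVec_add, Matrix.mulVec_smul] at hb2
      simp only [dot_add_left, dot_add_right, dot_smul_left, dot_smul_right, hσ2, hah,
        hahw, hww, ← hBdef, ← hWqdef, dot_comm w ahat,
        dot_comm (Mᵀ *ᵥ w) (Mᵀ *ᵥ ahat)] at hb2
      nlinarith [hb2]
    have := quad_zero _ _ hq
    linarith
  -- Wq bounds
  have hWq1 : Wq ≤ σ ^ 2 * (1 - c ^ 2) := by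
    have hb1 := transpose_bound M w
    have hb2 : euclNorm (Mᵀ *ᵥ w) ^ 2 ≤ (σ * euclNorm w) ^ 2 :=
      pow_le_pow_left₀ (euclNorm_nonneg _) hb1 2
    rw [mul_pow, sq_euclNorm, sq_euclNorm, hww] at hb2
    exact hb2
  -- column sums
  have hcolA : ∀ j, (Mᵀ *ᵥ ahat) j = dot (fun i => M i j) ahat := by
    intro j; simp [mulVec, dotProduct, dot]
  have hcolW : ∀ j, (Mᵀ *ᵥ w) j = dot (fun i => M i j) w := by
    intro j; simp [mulVec, dotProduct, dot]
  have hs1 : ∑ j, (dot (fun i => M i j) ahat) ^ 2 = σ ^ 2 := by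
    rw [← hσ2,
      show dot (Mᵀ *ᵥ ahat) (Mᵀ *ᵥ ahat) = ∑ j, (Mᵀ *ᵥ ahat) j * (Mᵀ *ᵥ ahat) j from rfl]
    refine Finset.sum_congr rfl fun j _ => ?_
    rw [hcolA j, sq]
  have hs2 : ∑ j, (dot (fun i => M i j) w) ^ 2 = Wq := by
    rw [hWqdef,
      show dot (Mᵀ *ᵥ w) (Mᵀ *ᵥ w) = ∑ j, (Mᵀ *ᵥ w) j * (Mᵀ *ᵥ w) j from rfl]
    refine Finset.sum_congr rfl fun j _ => ?_
    rw [hcolW j, sq]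
  have hs3 : ∑ j, dot (fun i => M i j) (fun i => M i j) = 1 := by
    rw [← hMsum, Finset.sum_comm]
    exact Finset.sum_congr rfl fun j _ => Finset.sum_congr rfl fun i _ => (sq _).symm
  have hWq2 : Wq ≤ (1 - σ ^ 2) * (1 - c ^ 2) := by
    have hcol : ∀ j : Fin d₂, dot w w * (dot (fun i => M i j) ahat) ^ 2
        + (dot (fun i => M i j) w) ^ 2
        ≤ dot w w * dot (fun i => M i j) (fun i => M i j) :=
      fun j => bessel _ _ _ hah hahw
    have hsum := Finset.sum_le_sum (fun j (_ : j ∈ Finset.univ) => hcol j)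
    rw [Finset.sum_add_distrib, ← Finset.mul_sum, ← Finset.mul_sum, hs1, hs2, hs3,
      hww] at hsum
    nlinarith [hsum]
  have hσle1 : σ ^ 2 ≤ 1 := by
    rw [← hs1, ← hs3]
    refine Finset.sum_le_sum fun j _ => ?_
    have := dot_sq_le (fun i => M i j) ahat
    rw [hah, mul_one] at this
    exact this
  -- T bound
  set T := dot (Mᵀ *ᵥ a) (Mᵀ *ᵥ a) with hTdef
  have hT : T = c ^ 2 * σ ^ 2 + Wq := by
    rw [hTdef, hdecomp]
    simp only [dot_add_left, dot_add_right, dot_smul_left, dot_smul_right, hσ2,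
      ← hBdef, ← hWqdef, dot_comm (Mᵀ *ᵥ w) (Mᵀ *ᵥ ahat), hB0]
    ring
  have hTmax : T ≤ max (c ^ 2) (1 / 2) := by
    have hm1 : c ^ 2 ≤ max (c ^ 2) (1 / 2) := le_max_left _ _
    have hm2 : (1:ℝ) / 2 ≤ max (c ^ 2) (1 / 2) := le_max_right _ _
    rcases le_or_gt (σ ^ 2) (1 / 2) with hσh | hσh
    · nlinarith [hT, hWq1, hσh, sq_nonneg c]
    · have key : T ≤ c ^ 2 * σ ^ 2 + (1 - σ ^ 2) * (1 - c ^ 2) := by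
        rw [hT]; nlinarith [hWq2]
      nlinarith [key, hσh,
        mul_nonneg (by linarith : (0:ℝ) ≤ σ ^ 2 - 1 / 2)
          (by linarith : (0:ℝ) ≤ max (c ^ 2) (1 / 2) - c ^ 2),
        mul_nonneg (by linarith : (0:ℝ) ≤ 1 - σ ^ 2)
          (by linarith : (0:ℝ) ≤ 2 * max (c ^ 2) (1 / 2) - 1)]
  have ht2 : dot (Mᵀ *ᵥ a) b ^ 2 ≤ T := by
    have := dot_sq_le (Mᵀ *ᵥ a) b
    rw [hbb, mul_one] at this
    exact this
  -- assemble
  have L1 := rank2_upper ahat a hah haa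
  have R1 := rank2_lower (fun p : Fin d₁ × Fin d₂ => M p.1 p.2)
    (fun p : Fin d₁ × Fin d₂ => a p.1 * b p.2) hu hv
  rw [hdotuv] at R1
  have mid : min (1 - c ^ 2) (1 / 2) ≤ 1 - dot (Mᵀ *ᵥ a) b ^ 2 := by
    rcases le_total (c ^ 2) (1 / 2) with h | h
    · have : dot (Mᵀ *ᵥ a) b ^ 2 ≤ 1 / 2 := by
        rw [max_eq_right h] at hTmax; linarith
      calc min (1 - c ^ 2) (1 / 2) ≤ 1 / 2 := min_le_right _ _
        _ ≤ 1 - dot (Mᵀ *ᵥ a) b ^ 2 := by linarith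
    · have : dot (Mᵀ *ᵥ a) b ^ 2 ≤ c ^ 2 := by
        rw [max_eq_left h] at hTmax; linarith
      calc min (1 - c ^ 2) (1 / 2) ≤ 1 - c ^ 2 := min_le_left _ _
        _ ≤ 1 - dot (Mᵀ *ᵥ a) b ^ 2 := by linarith
  calc min (specNorm (vecMulVec ahat ahat - vecMulVec a a) ^ 2) (1 / 2)
      ≤ min (1 - c ^ 2) (1 / 2) := min_le_min L1 le_rfl
    _ ≤ 1 - dot (Mᵀ *ᵥ a) b ^ 2 := mid
    _ ≤ _ := R1
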